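/- Let L̃ = L + diag(ι₁,...,ι_N) where L is a graph Laplacian and ι_i ∈ {0,1} with ι_i = 1 exactly for nodes in a root set 𝒞 such that every node is in a directed tree rooted in 𝒞. Let D̃ = I − (2I + D_in)^{-1} L̃ where D_in = diag(d̄_in(i)) with d̄_in(i) ≥ d_in(i). Then all entries of D̃ are nonnegative, every row sum of D̃ is at most 1, with strict inequality for rows i with ι_i = 1, and all eigenvalues of D̃ lie in the open unit disk. -/
import Mathlib

open Matrix

private lemma eig_exists {n : ℕ} (M : Matrix (Fin n) (Fin n) ℂ) (μ : ℂ) (h : μ ∈ spectrum ℂ M) :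
    ∃ v : Fin n → ℂ, v ≠ 0 ∧ M *ᵥ v = μ • v := by
  rw [spectrum.mem_iff] at h
  rw [Matrix.isUnit_iff_isUnit_det, isUnit_iff_ne_zero, not_not] at h
  obtain ⟨v, hv0, hv⟩ := (Matrix.exists_mulVec_eq_zero_iff).2 h
  refine ⟨v, hv0, ?_⟩
  rw [Matrix.sub_mulVec] at hv
  have h2 : (algebraMap ℂ (Matrix (Fin n) (Fin n) ℂ)) μ *ᵥ v = μ • v := by
    simp [Algebra.algebraMap_eq_smul_one, Matrix.smul_mulVec]
  rw [h2, sub_eq_zero] at hv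
  exact hv.symm

private lemma diag_inv {n : ℕ} (dbar : Fin n → ℝ) (h : ∀ i, 2 + dbar i ≠ 0) :
    (2 • (1 : Matrix (Fin n) (Fin n) ℝ) + Matrix.diagonal dbar)⁻¹
      = Matrix.diagonal (fun i => (2 + dbar i)⁻¹) := by
  have h1 : 2 • (1 : Matrix (Fin n) (Fin n) ℝ) + Matrix.diagonal dbar
      = Matrix.diagonal (fun i => 2 + dbar i) := by
    rw [← Matrix.diagonal_add]
    congr 1
    ext i j
    by_cases hij : i = j <;> simp [Matrix.diagonal_apply, Matrix.one_apply, hij]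
  rw [h1]
  apply Matrix.inv_eq_right_inv
  rw [Matrix.diagonal_mul_diagonal]
  ext i j
  by_cases hij : i = j <;> simp [Matrix.diagonal_apply, Matrix.one_apply, hij, mul_inv_cancel₀ (h _)]

theorem stmt_13 {N : ℕ}
    (a : Fin N → Fin N → ℝ)
    (ha : ∀ i j, 0 ≤ a i j) (hdiag : ∀ i, a i i = 0)
    (L : Matrix (Fin N) (Fin N) ℝ)
    (hL : ∀ i j, L i j = if i = j then ∑ k, a i k else -(a i j))
    (ι : Fin N → ℝ) (hι : ∀ i, ι i = 0 ∨ ι i = 1)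
    -- every node is reachable from some root node (with ι = 1)
    (hroot : ∀ i : Fin N, ∃ r : Fin N, ι r = 1 ∧
      Relation.ReflTransGen (fun x y : Fin N => 0 < a y x) r i)
    (dbar : Fin N → ℝ) (hdbar : ∀ i, (∑ j, a i j) ≤ dbar i)
    (Lt : Matrix (Fin N) (Fin N) ℝ) (hLt : Lt = L + Matrix.diagonal ι)
    (Dt : Matrix (Fin N) (Fin N) ℝ)
    (hDt : Dt = 1 - (2 • (1 : Matrix (Fin N) (Fin N) ℝ) + Matrix.diagonal dbar)⁻¹ * Lt) :
    (∀ i j, 0 ≤ Dt i j) ∧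
    (∀ i, ∑ j, Dt i j ≤ 1) ∧
    (∀ i, ι i = 1 → ∑ j, Dt i j < 1) ∧
    (∀ mu ∈ spectrum ℂ (Dt.map Complex.ofReal), ‖mu‖ < 1) := by
  -- basic positivity of the diagonal scaling
  have hsum_nonneg : ∀ i, 0 ≤ ∑ j, a i j := fun i =>
    Finset.sum_nonneg (fun j _ => ha i j)
  have hcpos : ∀ i, 0 < 2 + dbar i := fun i => by
    have := hdbar i; have := hsum_nonneg i; linarith
  have hcne : ∀ i, 2 + dbar i ≠ 0 := fun i => (hcpos i).ne'
  have hinvpos : ∀ i, 0 < (2 + dbar i)⁻¹ := fun i => inv_pos.2 (hcpos i)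
  -- ι bounds
  have hι0 : ∀ i, 0 ≤ ι i := fun i => by rcases hι i with h | h <;> rw [h] <;> norm_num
  have hι1 : ∀ i, ι i ≤ 1 := fun i => by rcases hι i with h | h <;> rw [h] <;> norm_num
  -- entrywise formula for Lt
  have hLte : ∀ i j, Lt i j = if i = j then (∑ k, a i k) + ι i else -(a i j) := by
    intro i j
    rw [hLt, Matrix.add_apply, hL, Matrix.diagonal_apply]
    by_cases hij : i = j
    · subst hij; simp
    · simp [hij]
  -- entrywise formula for Dt
  have hDte : ∀ i j, Dt i j = (if i = j then 1 else 0) - (2 + dbar i)⁻¹ * Lt i j := by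
    intro i j
    rw [hDt, Matrix.sub_apply, diag_inv dbar hcne, Matrix.diagonal_mul, Matrix.one_apply]
  -- nonnegativity
  have hDnn : ∀ i j, 0 ≤ Dt i j := by
    intro i j
    rw [hDte, hLte]
    by_cases hij : i = j
    · simp only [hij, if_true]
      have hle : (∑ k, a j k) + ι j ≤ 2 + dbar j := by
        have := hdbar j; have := hι1 j; linarith
      have h2 : (2 + dbar j)⁻¹ * ((∑ k, a j k) + ι j) ≤ 1 := by
        rw [← inv_mul_cancel₀ (hcne j)]
        subst hij
        exact mul_le_mul_of_nonneg_left hle (le_of_lt (hinvpos _))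
      subst hij
      linarith
    · simp only [hij, if_false]
      have : 0 ≤ (2 + dbar i)⁻¹ * a i j := mul_nonneg (le_of_lt (hinvpos i)) (ha i j)
      linarith [this]
  -- Dt strictly positive on edges and diagonal
  have hDpos_off : ∀ i j, i ≠ j → 0 < a i j → 0 < Dt i j := by
    intro i j hij hpos
    rw [hDte, hLte]
    simp only [hij, if_false]
    have : 0 < (2 + dbar i)⁻¹ * a i j := mul_pos (hinvpos i) hpos
    linarith
  -- row sums of Lt
  have hLtrow : ∀ i, ∑ j, Lt i j = ι i := by
    intro i
    rw [← Finset.add_sum_erase _ _ (Finset.mem_univ i)]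
    have h1 : Lt i i = (∑ k, a i k) + ι i := by rw [hLte]; simp
    have h2 : ∑ j ∈ Finset.univ.erase i, Lt i j = -((∑ k, a i k) - a i i) := by
      have h2a : ∑ j ∈ Finset.univ.erase i, Lt i j
          = ∑ j ∈ Finset.univ.erase i, -(a i j) := by
        refine Finset.sum_congr rfl (fun j hj => ?_)
        rw [hLte]
        have : i ≠ j := fun h => (Finset.mem_erase.1 hj).1 h.symm
        simp [this]
      rw [h2a, Finset.sum_neg_distrib, Finset.sum_erase_eq_sub (Finset.mem_univ i)]
    rw [h1, h2, hdiag]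
    ring
  -- row sums of Dt
  have hDrow : ∀ i, ∑ j, Dt i j = 1 - (2 + dbar i)⁻¹ * ι i := by
    intro i
    have : ∑ j, Dt i j = (∑ j, (if i = j then (1:ℝ) else 0)) - (2 + dbar i)⁻¹ * ∑ j, Lt i j := by
      rw [Finset.mul_sum, ← Finset.sum_sub_distrib]
      exact Finset.sum_congr rfl (fun j _ => by rw [hDte])
    rw [this, hLtrow]
    simp
  have hrow_le : ∀ i, ∑ j, Dt i j ≤ 1 := by
    intro i
    rw [hDrow]
    have : 0 ≤ (2 + dbar i)⁻¹ * ι i := mul_nonneg (le_of_lt (hinvpos i)) (hι0 i)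
    linarith
  have hrow_lt : ∀ i, ι i = 1 → ∑ j, Dt i j < 1 := by
    intro i hi
    rw [hDrow, hi, mul_one]
    linarith [hinvpos i]
  refine ⟨hDnn, hrow_le, hrow_lt, ?_⟩
  -- spectral part
  intro μ hμ
  by_contra hcon
  push_neg at hcon
  obtain ⟨v, hv0, hv⟩ := eig_exists _ μ hμ
  -- maximizer of ‖v ·‖
  have hNe : (Finset.univ : Finset (Fin N)).Nonempty := by
    by_contra hne
    apply hv0
    funext i
    exact absurd (Finset.mem_univ i) (fun h => hne ⟨i, h⟩)
  obtain ⟨i₀, -, hi₀⟩ := Finset.exists_max_image Finset.univ (fun i => ‖v i‖) hNe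
  set M : ℝ := ‖v i₀‖ with hM
  have hMmax : ∀ j, ‖v j‖ ≤ M := fun j => hi₀ j (Finset.mem_univ j)
  have hMpos : 0 < M := by
    rcases (norm_nonneg (v i₀)).lt_or_eq with h | h
    · exact hM ▸ h
    · exfalso; apply hv0; funext j
      have h2 : ‖v j‖ ≤ 0 := le_trans (hMmax j) (by rw [hM, ← h])
      simpa using norm_le_zero_iff.1 h2
  -- the key row analysis at a maximizing index
  have hrowkey : ∀ j, ‖v j‖ = M → ι j = 0 ∧ ∀ k, 0 < Dt j k → ‖v k‖ = M := by
    intro j hj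
    have heig : ∑ k, (Dt j k : ℂ) * v k = μ * v j := by
      have := congrFun hv j
      simpa [Matrix.mulVec, Matrix.map_apply, dotProduct, Pi.smul_apply, smul_eq_mul] using this
    have h1 : ‖μ‖ * M ≤ ∑ k, Dt j k * ‖v k‖ := by
      calc ‖μ‖ * M = ‖μ * v j‖ := by rw [norm_mul, hj]
        _ = ‖∑ k, (Dt j k : ℂ) * v k‖ := by rw [heig]
        _ ≤ ∑ k, ‖(Dt j k : ℂ) * v k‖ := norm_sum_le _ _
        _ = ∑ k, Dt j k * ‖v k‖ := by
            refine Finset.sum_congr rfl (fun k _ => ?_)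
            rw [norm_mul, Complex.norm_real, Real.norm_eq_abs, abs_of_nonneg (hDnn j k)]
    have h2 : ∑ k, Dt j k * ‖v k‖ ≤ ∑ k, Dt j k * M :=
      Finset.sum_le_sum (fun k _ => mul_le_mul_of_nonneg_left (hMmax k) (hDnn j k))
    have h3 : ∑ k, Dt j k * M = (∑ k, Dt j k) * M := by rw [Finset.sum_mul]
    have h4 : (∑ k, Dt j k) * M ≤ M := by
      have := hrow_le j
      nlinarith [hMpos]
    have h5 : M ≤ ‖μ‖ * M := le_mul_of_one_le_left (le_of_lt hMpos) hcon
    -- all equalities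
    have heq2 : ∑ k, Dt j k * ‖v k‖ = ∑ k, Dt j k * M := le_antisymm h2 (by linarith)
    have hιj : ι j = 0 := by
      have hr : (∑ k, Dt j k) = 1 := by
        have hge : M ≤ (∑ k, Dt j k) * M := by linarith
        nlinarith [hMpos, hrow_le j]
      rcases hι j with h | h
      · exact h
      · exfalso; have := hrow_lt j h; linarith
    refine ⟨hιj, fun k hk => ?_⟩
    by_contra hne
    have hlt : ‖v k‖ < M := lt_of_le_of_ne (hMmax k) hne
    have : ∑ k, Dt j k * ‖v k‖ < ∑ k, Dt j k * M := by
      apply Finset.sum_lt_sum (fun l _ => mul_le_mul_of_nonneg_left (hMmax l) (hDnn j l))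
      exact ⟨k, Finset.mem_univ k, by nlinarith⟩
    linarith [this, heq2.ge]
  -- propagate max backwards along reachability
  have hprop : ∀ x y : Fin N,
      Relation.ReflTransGen (fun x y : Fin N => 0 < a y x) x y → ‖v y‖ = M → ‖v x‖ = M := by
    intro x y h
    induction h with
    | refl => exact fun h => h
    | tail hxb hbc ih =>
      intro hc
      rename_i b c
      apply ih
      -- hbc : 0 < a c b, hc : ‖v c‖ = M
      have hne : c ≠ b := by
        intro h; rw [h] at hbc; rw [hdiag] at hbc; exact lt_irrefl 0 hbc
      exact (hrowkey c hc).2 b (hDpos_off c b hne hbc)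
  obtain ⟨r, hr1, hrreach⟩ := hroot i₀
  have hrM : ‖v r‖ = M := hprop r i₀ hrreach rfl
  have := (hrowkey r hrM).1
  rw [hr1] at this
  norm_num at this
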